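/- Every element of SO(3) is conjugate within SO(3) to an element of the maximal torus of rotations about the z-axis: for every A ∈ M₃(ℝ) with Aᵀ * A = 1 and det A = 1, there exist P ∈ M₃(ℝ) with Pᵀ * P = 1 and det P = 1, and θ ∈ ℝ, such that A = P * !![cos θ, sin θ, 0; −sin θ, cos θ, 0; 0, 0, 1] * Pᵀ. -/

import Mathlib

open Matrix Real

lemma circle_param {x y : ℝ} (h : x^2 + y^2 = 1) :
    ∃ θ : ℝ, Real.cos θ = x ∧ Real.sin θ = y := by
  have habs : ‖(⟨x, y⟩ : ℂ)‖ = 1 := by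
    simp [Complex.norm_def, Complex.normSq_mk, ← sq]
    exact h
  have hz : (⟨x, y⟩ : ℂ) ≠ 0 := by
    intro h0; rw [h0] at habs; simp at habs
  refine ⟨Complex.arg ⟨x, y⟩, ?_, ?_⟩
  · rw [Complex.cos_arg hz, habs]; simp
  · rw [Complex.sin_arg, habs]; simp

lemma rot_block (B : Matrix (Fin 3) (Fin 3) ℝ) (_hB : Bᵀ * B = 1) (hB' : B * Bᵀ = 1)
    (hdet : B.det = 1) (hcol : ∀ i, B i 2 = if i = 2 then 1 else 0) :
    ∃ θ : ℝ, B = !![Real.cos θ, Real.sin θ, 0; -Real.sin θ, Real.cos θ, 0; 0, 0, 1] := by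
  have h02 : B 0 2 = 0 := by simpa using hcol 0
  have h12 : B 1 2 = 0 := by simpa using hcol 1
  have h22 : B 2 2 = 1 := by simpa using hcol 2
  have row : ∀ i j : Fin 3, B i 0 * B j 0 + B i 1 * B j 1 + B i 2 * B j 2
      = if i = j then 1 else 0 := by
    intro i j
    have := congrFun (congrFun hB' i) j
    simpa [Matrix.mul_apply, Fin.sum_univ_three, Matrix.one_apply] using this
  have r22 := row 2 2
  simp [h22] at r22
  have h20 : B 2 0 = 0 := by nlinarith [row 2 2, sq_nonneg (B 2 0), sq_nonneg (B 2 1)]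
  have h21 : B 2 1 = 0 := by nlinarith [row 2 2, sq_nonneg (B 2 0), sq_nonneg (B 2 1)]
  have r00 : B 0 0 ^ 2 + B 0 1 ^ 2 = 1 := by have := row 0 0; simp [h02] at this; nlinarith [this]
  have r01 : B 0 0 * B 1 0 + B 0 1 * B 1 1 = 0 := by
    have := row 0 1; simp [h02, h12] at this; linarith [this]
  have hd : B 0 0 * B 1 1 - B 0 1 * B 1 0 = 1 := by
    have := hdet
    rw [Matrix.det_fin_three] at this
    rw [h02, h12, h20, h21, h22] at this
    linarith [this]
  obtain ⟨θ, hc, hs⟩ := circle_param r00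
  have h10 : B 1 0 = -Real.sin θ := by
    rw [← hc, ← hs] at r01 hd
    linear_combination Real.cos θ * r01 - Real.sin θ * hd - B 1 0 * Real.sin_sq_add_cos_sq θ
  have h11 : B 1 1 = Real.cos θ := by
    rw [← hc, ← hs] at r01 hd
    linear_combination Real.cos θ * hd + Real.sin θ * r01 - B 1 1 * Real.sin_sq_add_cos_sq θ
  refine ⟨θ, ?_⟩
  ext i j
  fin_cases i <;> fin_cases j <;>
    simp [h02, h12, h20, h21, h22, h10, h11, hc, hs]

lemma main_aux (A P : Matrix (Fin 3) (Fin 3) ℝ) (hA : Aᵀ * A = 1) (hdetA : A.det = 1)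
    (hP : Pᵀ * P = 1) (hdetP : P.det = 1) (u : Fin 3 → ℝ) (hu : A.mulVec u = u)
    (hcol : ∀ i, P i 2 = u i) :
    ∃ (Q : Matrix (Fin 3) (Fin 3) ℝ) (θ : ℝ),
      Qᵀ * Q = 1 ∧ Q.det = 1 ∧
      A = Q * !![Real.cos θ, Real.sin θ, 0; -Real.sin θ, Real.cos θ, 0; 0, 0, 1] * Qᵀ := by
  have hPP' : P * Pᵀ = 1 := mul_eq_one_comm.mp hP
  set B := Pᵀ * A * P with hBdef
  have hBo : Bᵀ * B = 1 := by
    have : Bᵀ * B = Pᵀ * (Aᵀ * ((P * Pᵀ) * (A * P))) := by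
      simp [hBdef, Matrix.transpose_mul, Matrix.mul_assoc]
    rw [this, hPP', Matrix.one_mul, ← Matrix.mul_assoc Aᵀ A P, hA, Matrix.one_mul, hP]
  have hBo' : B * Bᵀ = 1 := mul_eq_one_comm.mp hBo
  have hdetB : B.det = 1 := by
    simp [hBdef, Matrix.det_mul, Matrix.det_transpose, hdetA, hdetP]
  have he : P.mulVec (fun i => if i = 2 then 1 else 0) = u := by
    funext i
    simp [Matrix.mulVec, dotProduct, Fin.sum_univ_three, hcol i]
  have hBe : B.mulVec (fun i => if i = 2 then 1 else 0) = (fun i => if i = 2 then 1 else 0) := by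
    have h1 : B.mulVec (fun i => if i = 2 then 1 else 0)
        = Pᵀ.mulVec (A.mulVec (P.mulVec (fun i => if i = 2 then 1 else 0))) := by
      rw [hBdef, Matrix.mul_assoc, ← Matrix.mulVec_mulVec, ← Matrix.mulVec_mulVec]
    rw [h1, he, hu, ← he, Matrix.mulVec_mulVec, hP, Matrix.one_mulVec]
  have hcolB : ∀ i, B i 2 = if i = 2 then 1 else 0 := by
    intro i
    have := congrFun hBe i
    simpa [Matrix.mulVec, dotProduct, Fin.sum_univ_three] using this
  obtain ⟨θ, hθ⟩ := rot_block B hBo hBo' hdetB hcolB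
  refine ⟨P, θ, hP, hdetP, ?_⟩
  rw [← hθ, hBdef]
  calc A = (P * Pᵀ) * A * (P * Pᵀ) := by rw [hPP']; simp
    _ = P * (Pᵀ * A * P) * Pᵀ := by simp [Matrix.mul_assoc]

/-- every element of `SO(3)` is conjugate within `SO(3)` to a rotation about the
`z`-axis. -/
theorem SO3_conjugate_to_maximal_torus (A : Matrix (Fin 3) (Fin 3) ℝ)
    (hA : Aᵀ * A = 1) (hdet : A.det = 1) :
    ∃ (P : Matrix (Fin 3) (Fin 3) ℝ) (θ : ℝ),
      Pᵀ * P = 1 ∧ P.det = 1 ∧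
      A = P * !![Real.cos θ, Real.sin θ, 0; -Real.sin θ, Real.cos θ, 0; 0, 0, 1] * Pᵀ := by
  -- Step 1: A has eigenvalue 1
  have hkey : (A - 1).det = 0 := by
    have h1 : Aᵀ * (A - 1) = (1 - A)ᵀ := by
      rw [Matrix.mul_sub, hA, Matrix.mul_one, Matrix.transpose_sub, Matrix.transpose_one]
    have h2 : (A - 1).det = (1 - A).det := by
      calc (A - 1).det = Aᵀ.det * (A - 1).det := by rw [Matrix.det_transpose, hdet, one_mul]
        _ = (Aᵀ * (A - 1)).det := (Matrix.det_mul _ _).symm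
        _ = ((1 - A)ᵀ).det := by rw [h1]
        _ = (1 - A).det := Matrix.det_transpose _
    have h3 : (1 - A) = -(A - 1) := (neg_sub A 1).symm
    rw [h3, Matrix.det_neg] at h2
    simp at h2
    linarith
  obtain ⟨v, hv0, hv⟩ := Matrix.exists_mulVec_eq_zero_iff.mpr hkey
  have hAv : A.mulVec v = v := by
    have := hv
    rw [Matrix.sub_mulVec, Matrix.one_mulVec, sub_eq_zero] at this
    exact this
  -- Step 2: normalize and extend to an orthonormal basis
  set vE : EuclideanSpace ℝ (Fin 3) := (WithLp.equiv 2 (Fin 3 → ℝ)).symm v with hvE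
  have hvE0 : vE ≠ 0 := by
    intro h
    apply hv0
    have := congrArg (WithLp.equiv 2 (Fin 3 → ℝ)) h
    simpa [hvE] using this
  set uE : EuclideanSpace ℝ (Fin 3) := (‖vE‖⁻¹ : ℝ) • vE with huE
  have huE1 : ‖uE‖ = 1 := norm_smul_inv_norm hvE0
  have hinneru : (inner ℝ uE uE : ℝ) = 1 := by
    rw [real_inner_self_eq_norm_mul_norm, huE1]; norm_num
  have hON : Orthonormal ℝ (Set.restrict {2} (fun _ : Fin 3 => uE)) := by
    rw [orthonormal_iff_ite]
    intro i j
    have hij : i = j := by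
      apply Subtype.ext
      have h1 := i.2
      have h2 := j.2
      simp only [Set.mem_singleton_iff] at h1 h2
      rw [h1, h2]
    simp [hij, hinneru]
    exact Or.inl huE1
  have hcard : Module.finrank ℝ (EuclideanSpace ℝ (Fin 3)) = Fintype.card (Fin 3) := by
    simp [finrank_euclideanSpace_fin]
  obtain ⟨b, hb⟩ := hON.exists_orthonormalBasis_extension_of_card_eq hcard
  have hb2 : b 2 = uE := hb 2 rfl
  -- Step 3: the matrix of the basis
  set Q : Matrix (Fin 3) (Fin 3) ℝ := Matrix.of (fun i j => b j i) with hQdef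
  have hinner : ∀ i j, (∑ k, b i k * b j k) = if i = j then (1:ℝ) else 0 := by
    intro i j
    have := (orthonormal_iff_ite.mp b.orthonormal) i j
    simpa [PiLp.inner_apply, RCLike.inner_apply, mul_comm] using this
  have hQ : Qᵀ * Q = 1 := by
    ext i j
    simp only [Matrix.mul_apply, Matrix.transpose_apply, hQdef, Matrix.of_apply,
      Matrix.one_apply]
    exact hinner i j
  have hu : ∀ c : ℝ, A.mulVec (c • v) = c • v := by
    intro c; rw [Matrix.mulVec_smul, hAv]
  have huEv : ∀ i, uE i = (‖vE‖⁻¹ • v) i := fun i => rfl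
  have hAuE : A.mulVec (fun i => uE i) = fun i => uE i := by
    have := hu ‖vE‖⁻¹
    convert this using 2
    · exact funext huEv
    · exact huEv _
  have hdQ : Q.det = 1 ∨ Q.det = -1 := by
    have : Q.det * Q.det = 1 := by
      have := congrArg Matrix.det hQ
      rwa [Matrix.det_mul, Matrix.det_transpose, Matrix.det_one] at this
    exact mul_self_eq_one_iff.mp this
  rcases hdQ with hdQ | hdQ
  · exact main_aux A Q hA hdet hQ hdQ (fun i => uE i) hAuE
      (fun i => by simp [hQdef, hb2])
  · -- flip the sign of the first column
    set D : Matrix (Fin 3) (Fin 3) ℝ := Matrix.diagonal ![-1, 1, 1] with hDdef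
    have hDD : D * D = 1 := by
      rw [hDdef, Matrix.diagonal_mul_diagonal]
      ext i j
      fin_cases i <;> fin_cases j <;> simp [Matrix.diagonal, Matrix.one_apply]
    have hDT : Dᵀ = D := Matrix.diagonal_transpose _
    have hdetD : D.det = -1 := by
      rw [hDdef, Matrix.det_diagonal, Fin.prod_univ_three]
      norm_num
      rfl
    refine main_aux A (Q * D) hA hdet ?_ ?_ (fun i => uE i) hAuE ?_
    · rw [Matrix.transpose_mul, hDT, Matrix.mul_assoc, ← Matrix.mul_assoc Qᵀ Q D, hQ,
        Matrix.one_mul, hDD]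
    · rw [Matrix.det_mul, hdQ, hdetD]; norm_num
    · intro i
      simp [Matrix.mul_apply, Fin.sum_univ_three, hDdef, Matrix.diagonal, hQdef, hb2]
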